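/- Let X and Y be topological spaces such that Y is not countably compact (there exists a countable open cover of Y with no finite subcover). If the projection π_X : X × Y → X is a closed map, then X is a P-space. -/
import Mathlib


open Set

/-- `X` is a P-space: every countable intersection of open sets is open. -/
def IsPSpace (X : Type*) [TopologicalSpace X] : Prop :=
  ∀ F : Set (Set X), F.Countable → (∀ U ∈ F, IsOpen U) → IsOpen (⋂₀ F)

theorem stmt16 {X Y : Type*} [TopologicalSpace X] [TopologicalSpace Y]
    -- `Y` is not countably compact: some countable open cover has no finite subcover
    (hY : ∃ 𝒰 : Set (Set Y), 𝒰.Countable ∧ (∀ U ∈ 𝒰, IsOpen U) ∧ ⋃₀ 𝒰 = Set.univ ∧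
      ¬ ∃ F : Set (Set Y), F ⊆ 𝒰 ∧ F.Finite ∧ ⋃₀ F = Set.univ)
    (hproj : IsClosedMap (Prod.fst : X × Y → X)) :
    IsPSpace X := by
  intro F hFc hFo
  rcases F.eq_empty_or_nonempty with rfl | hFne
  · simp
  obtain ⟨𝒰, h𝒰c, h𝒰o, h𝒰cov, h𝒰nf⟩ := hY
  have h𝒰ne : 𝒰.Nonempty := by
    rcases 𝒰.eq_empty_or_nonempty with rfl | h
    · exact absurd ⟨∅, Set.empty_subset _, Set.finite_empty, h𝒰cov⟩ h𝒰nf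
    · exact h
  obtain ⟨U, hU⟩ := Set.Countable.exists_eq_range hFc hFne
  obtain ⟨V, hV⟩ := Set.Countable.exists_eq_range h𝒰c h𝒰ne
  have hUo : ∀ n, IsOpen (U n) := fun n => hFo _ (hU ▸ Set.mem_range_self n)
  have hVo : ∀ n, IsOpen (V n) := fun n => h𝒰o _ (hV ▸ Set.mem_range_self n)
  set U' : ℕ → Set X := fun n => ⋂ k : Fin (n + 1), U k with hU'
  set W : ℕ → Set Y := fun n => ⋃ k : Fin (n + 1), V k with hW
  set E : Set (X × Y) := ⋃ n, U' n ×ˢ W n with hE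
  have hEopen : IsOpen E :=
    isOpen_iUnion fun n =>
      ((isOpen_iInter_of_finite (ι := Fin (n + 1)) fun k => hUo k).prod
        (isOpen_iUnion fun k => hVo k))
  have hCclosed : IsClosed (Prod.fst '' Eᶜ) := hproj _ hEopen.isClosed_compl
  have hVcov : ∀ y : Y, ∃ n, y ∈ V n := by
    intro y
    have : y ∈ ⋃₀ 𝒰 := h𝒰cov.symm ▸ Set.mem_univ y
    obtain ⟨S, hS, hyS⟩ := this
    obtain ⟨n, rfl⟩ := hV ▸ hS
    exact ⟨n, hyS⟩
  have key : ⋂₀ F = (Prod.fst '' Eᶜ)ᶜ := by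
    ext x
    rw [hU, Set.sInter_range]
    constructor
    · intro hx hmem
      obtain ⟨⟨a, y⟩, hC, rfl⟩ := hmem
      obtain ⟨n, hyn⟩ := hVcov y
      refine hC (Set.mem_iUnion.2 ⟨n, ?_, ?_⟩)
      · exact Set.mem_iInter.2 fun k => Set.mem_iInter.1 hx k
      · exact Set.mem_iUnion.2 ⟨⟨n, Nat.lt_succ_self n⟩, hyn⟩
    · intro hx
      refine Set.mem_iInter.2 fun m => ?_
      by_contra hxm
      apply h𝒰nf
      refine ⟨V '' {k | k < m}, ?_, (Set.finite_Iio m).image V, ?_⟩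
      · rintro S ⟨k, _, rfl⟩
        exact hV ▸ Set.mem_range_self k
      · apply Set.eq_univ_of_forall
        intro y
        have hy : (x, y) ∈ E := by
          by_contra h
          exact hx ⟨(x, y), h, rfl⟩
        obtain ⟨n, hn⟩ := Set.mem_iUnion.1 hy
        have hxn : x ∈ U' n := hn.1
        have hnm : n < m := by
          by_contra hge
          push_neg at hge
          exact hxm (Set.mem_iInter.1 hxn ⟨m, Nat.lt_succ_of_le hge⟩)
        obtain ⟨⟨k, hk⟩, hyk⟩ := Set.mem_iUnion.1 hn.2
        exact ⟨V k, ⟨k, lt_of_lt_of_le hk hnm, rfl⟩, hyk⟩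
  rw [key]
  exact hCclosed.isOpen_compl
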